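/- Let ν ≥ 3 be a natural number, let ε, p be real numbers with 0 ≤ ε < p ≤ 1, and let λ be a real number with 0 < λ < 1/(2ν−1). Then the linear system γ_{11} = 1 + λ·γ_{11}·((ν−2)·p + 1) + λ·γ_{12}·ν·ε; γ_{12} = 1 + λ·γ_{21}·((ν−1)·ε + 1) + λ·γ_{22}·(ν−1)·p; γ_{21} = 1 + λ·γ_{11}·(ν−1)·p + λ·γ_{12}·((ν−1)·ε + 1); γ_{22} = 1 + λ·γ_{21}·ν·ε + λ·γ_{22}·((ν−2)·p + 1) has a unique real solution (γ_{11}, γ_{12}, γ_{21}, γ_{22}), and this solution satisfies γ_{11} = γ_{22}, γ_{12} = γ_{21}, and γ_{11}·(1 − λ·(1−p)) = γ_{12}·(1 − λ·(1−ε)). -/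

import Mathlib

/-- For the symmetric two-group stochastic block system (equal group
sizes `ν ≥ 3`, intra-group probability `p`, inter-group probability `ε`, with
`0 ≤ ε < p ≤ 1` and `0 < λ < 1/(2ν - 1)`), the linear system has a unique real
solution, and this solution satisfies `γ₁₁ = γ₂₂`, `γ₁₂ = γ₂₁`, and
`γ₁₁·(1 - λ(1-p)) = γ₁₂·(1 - λ(1-ε))`. -/
theorem stmt_17 (ν : ℕ) (hν : 3 ≤ ν)
    (ε p lam : ℝ) (hε0 : 0 ≤ ε) (hεp : ε < p) (hp1 : p ≤ 1)
    (hlam0 : 0 < lam) (hlam1 : lam < 1 / (2 * (ν : ℝ) - 1)) :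
    (∃! g : ℝ × ℝ × ℝ × ℝ,
      g.1 = 1 + lam * g.1 * (((ν : ℝ) - 2) * p + 1) + lam * g.2.1 * (ν : ℝ) * ε ∧
      g.2.1 = 1 + lam * g.2.2.1 * (((ν : ℝ) - 1) * ε + 1) +
        lam * g.2.2.2 * ((ν : ℝ) - 1) * p ∧
      g.2.2.1 = 1 + lam * g.1 * ((ν : ℝ) - 1) * p +
        lam * g.2.1 * (((ν : ℝ) - 1) * ε + 1) ∧
      g.2.2.2 = 1 + lam * g.2.2.1 * (ν : ℝ) * ε +
        lam * g.2.2.2 * (((ν : ℝ) - 2) * p + 1)) ∧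
    (∀ γ11 γ12 γ21 γ22 : ℝ,
      γ11 = 1 + lam * γ11 * (((ν : ℝ) - 2) * p + 1) + lam * γ12 * (ν : ℝ) * ε →
      γ12 = 1 + lam * γ21 * (((ν : ℝ) - 1) * ε + 1) + lam * γ22 * ((ν : ℝ) - 1) * p →
      γ21 = 1 + lam * γ11 * ((ν : ℝ) - 1) * p + lam * γ12 * (((ν : ℝ) - 1) * ε + 1) →
      γ22 = 1 + lam * γ21 * (ν : ℝ) * ε + lam * γ22 * (((ν : ℝ) - 2) * p + 1) →
      γ11 = γ22 ∧ γ12 = γ21 ∧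
        γ11 * (1 - lam * (1 - p)) = γ12 * (1 - lam * (1 - ε))) := by
  have hn3 : (3:ℝ) ≤ (ν:ℝ) := by exact_mod_cast hν
  have hp0 : 0 < p := lt_of_le_of_lt hε0 hεp
  have hε1 : ε ≤ 1 := le_trans hεp.le hp1
  have h2n : 0 < 2*(ν:ℝ) - 1 := by linarith
  have hl1 : lam * (2*(ν:ℝ) - 1) < 1 := by
    have := (lt_div_iff₀ h2n).mp hlam1
    linarith
  obtain ⟨a, ha⟩ : ∃ a : ℝ, a = lam * (((ν:ℝ)-2)*p + 1) := ⟨_, rfl⟩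
  obtain ⟨b, hb⟩ : ∃ b : ℝ, b = lam * ((ν:ℝ)*ε) := ⟨_, rfl⟩
  obtain ⟨c, hc⟩ : ∃ c : ℝ, c = lam * (((ν:ℝ)-1)*ε + 1) := ⟨_, rfl⟩
  obtain ⟨d, hd⟩ : ∃ d : ℝ, d = lam * (((ν:ℝ)-1)*p) := ⟨_, rfl⟩
  have ha0 : 0 ≤ a := by
    rw [ha]; apply mul_nonneg hlam0.le; nlinarith
  have hb0 : 0 ≤ b := by
    rw [hb]; apply mul_nonneg hlam0.le; apply mul_nonneg (by linarith) hε0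
  have hc0 : 0 ≤ c := by
    rw [hc]; apply mul_nonneg hlam0.le; nlinarith
  have hd0 : 0 ≤ d := by
    rw [hd]; apply mul_nonneg hlam0.le; apply mul_nonneg (by linarith) hp0.le
  have hab : a + b < 1 := by
    have hs : ((ν:ℝ)-2)*p + 1 + (ν:ℝ)*ε ≤ 2*(ν:ℝ) - 1 := by
      nlinarith [mul_nonneg (show (0:ℝ) ≤ (ν:ℝ)-2 by linarith) (show (0:ℝ) ≤ 1-p by linarith),
        mul_nonneg (show (0:ℝ) ≤ (ν:ℝ) by linarith) (show (0:ℝ) ≤ 1-ε by linarith)]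
    have : a + b = lam * (((ν:ℝ)-2)*p + 1 + (ν:ℝ)*ε) := by rw [ha, hb]; ring
    rw [this]
    calc lam * (((ν:ℝ)-2)*p + 1 + (ν:ℝ)*ε) ≤ lam * (2*(ν:ℝ) - 1) := by
          apply mul_le_mul_of_nonneg_left hs hlam0.le
      _ < 1 := hl1
  have hcd : c + d < 1 := by
    have hs : ((ν:ℝ)-1)*ε + 1 + ((ν:ℝ)-1)*p ≤ 2*(ν:ℝ) - 1 := by
      nlinarith [mul_nonneg (show (0:ℝ) ≤ (ν:ℝ)-1 by linarith) (show (0:ℝ) ≤ 2-ε-p by linarith)]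
    have : c + d = lam * (((ν:ℝ)-1)*ε + 1 + ((ν:ℝ)-1)*p) := by rw [hc, hd]; ring
    rw [this]
    calc lam * (((ν:ℝ)-1)*ε + 1 + ((ν:ℝ)-1)*p) ≤ lam * (2*(ν:ℝ) - 1) := by
          apply mul_le_mul_of_nonneg_left hs hlam0.le
      _ < 1 := hl1
  have hΔ : 0 < (1-a)*(1-c) - b*d := by
    nlinarith [mul_pos (show (0:ℝ) < 1-a-b by linarith) (show (0:ℝ) < 1-c by linarith),
      mul_nonneg hb0 (show (0:ℝ) ≤ 1-c-d by linarith)]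
  have hK : 0 < (1-a)*(1+c) + b*d := by
    nlinarith [mul_pos (show (0:ℝ) < 1-a by linarith) (show (0:ℝ) < 1+c by linarith),
      mul_nonneg hb0 hd0]
  obtain ⟨X, hX⟩ : ∃ X : ℝ, X = ((1-c)+b)/((1-a)*(1-c)-b*d) := ⟨_, rfl⟩
  obtain ⟨Y, hY⟩ : ∃ Y : ℝ, Y = ((1-a)+d)/((1-a)*(1-c)-b*d) := ⟨_, rfl⟩
  have hΔ' : (1-a)*(1-c) - b*d ≠ 0 := ne_of_gt hΔ
  have eX : X = 1 + a*X + b*Y := by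
    rw [hX, hY, div_eq_iff hΔ', add_mul, add_mul, mul_assoc, mul_assoc, div_mul_cancel₀ _ hΔ', div_mul_cancel₀ _ hΔ']; ring
  have eY : Y = 1 + c*Y + d*X := by
    rw [hX, hY, div_eq_iff hΔ', add_mul, add_mul, mul_assoc, mul_assoc, div_mul_cancel₀ _ hΔ', div_mul_cancel₀ _ hΔ']; ring
  have main : ∀ u v w z : ℝ,
      u = 1 + a*u + b*v →
      v = 1 + c*w + d*z →
      w = 1 + d*u + c*v →
      z = 1 + b*w + a*z →
      u = X ∧ v = Y ∧ w = Y ∧ z = X := by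
    intro u v w z h1 h2 h3 h4
    have hveq : ((1-a)*(1+c) + b*d) * (u - z) = 0 := by
      linear_combination (1+c)*h1 - (1+c)*h4 + b*h2 - b*h3
    have huz : u = z := by
      rcases mul_eq_zero.mp hveq with h | h
      · exact absurd h (ne_of_gt hK)
      · linarith
    subst huz
    have hweq : (1+c)*(v - w) = 0 := by
      linear_combination h2 - h3
    have hvw : v = w := by
      rcases mul_eq_zero.mp hweq with h | h
      · exact absurd h (ne_of_gt (by linarith : (0:ℝ) < 1 + c))
      · linarith
    subst hvw
    have hu : ((1-a)*(1-c) - b*d) * u = (1-c) + b := by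
      linear_combination (1-c)*h1 + b*h2
    have hv : ((1-a)*(1-c) - b*d) * v = (1-a) + d := by
      linear_combination d*h1 + (1-a)*h2
    have hux : u = X := by rw [hX, eq_div_iff hΔ']; linear_combination hu
    have hvy : v = Y := by rw [hY, eq_div_iff hΔ']; linear_combination hv
    exact ⟨hux, hvy, hvy, hux⟩
  have ratio : X * (1 - lam * (1 - p)) = Y * (1 - lam * (1 - ε)) := by
    linear_combination eX - eY + X*ha - X*hd - Y*hc + Y*hb
  constructor
  · refine ⟨(X, Y, Y, X), ⟨?_, ?_, ?_, ?_⟩, ?_⟩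
    · linear_combination eX + X*ha + Y*hb
    · linear_combination eY + Y*hc + X*hd
    · linear_combination eY + X*hd + Y*hc
    · linear_combination eX + Y*hb + X*ha
    · rintro ⟨u, v, w, z⟩ ⟨h1, h2, h3, h4⟩
      simp only at h1 h2 h3 h4
      have h1' : u = 1 + a*u + b*v := by
        rw [ha, hb]; linear_combination h1
      have h2' : v = 1 + c*w + d*z := by
        rw [hc, hd]; linear_combination h2
      have h3' : w = 1 + d*u + c*v := by
        rw [hc, hd]; linear_combination h3
      have h4' : z = 1 + b*w + a*z := by
        rw [ha, hb]; linear_combination h4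
      obtain ⟨e1, e2, e3, e4⟩ := main u v w z h1' h2' h3' h4'
      simp [Prod.ext_iff, e1, e2, e3, e4]
  · intro γ11 γ12 γ21 γ22 h1 h2 h3 h4
    have h1' : γ11 = 1 + a*γ11 + b*γ12 := by
      rw [ha, hb]; linear_combination h1
    have h2' : γ12 = 1 + c*γ21 + d*γ22 := by
      rw [hc, hd]; linear_combination h2
    have h3' : γ21 = 1 + d*γ11 + c*γ12 := by
      rw [hc, hd]; linear_combination h3
    have h4' : γ22 = 1 + b*γ21 + a*γ22 := by
      rw [ha, hb]; linear_combination h4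
    obtain ⟨e1, e2, e3, e4⟩ := main γ11 γ12 γ21 γ22 h1' h2' h3' h4'
    refine ⟨by rw [e1, e4], by rw [e2, e3], ?_⟩
    rw [e1, e2]; exact ratio
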